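/- Let G be a Lie algebra over a field K and W = (W^{ij}_s) a collection of scalars, 1 ≤ i,j,s ≤ n. Define a bracket on G^n by ([x,y]_W)_s = Σ_{i,j} W^{ij}_s [x_i, y_j]. If W^{ij}_s = W^{ji}_s for all i,j,s and Σ_k (W^{sk}_i W^{qp}_k − W^{qk}_i W^{sp}_k) = 0 for all i,s,q,p, then [·,·]_W is a Lie bracket on G^n (bilinear, antisymmetric, and satisfying the Jacobi identity). -/

import Mathlib

section aux
variable {n : ℕ} {M : Type*} [AddCommMonoid M]

lemma cyc_sum (f : Fin n → Fin n → Fin n → M) :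
    ∑ i, ∑ p, ∑ q, f i p q = ∑ i, ∑ p, ∑ q, f q i p := by
  rw [Finset.sum_comm]
  exact Finset.sum_congr rfl fun p _ => Finset.sum_comm

lemma my_lie_sum {L : Type*} [LieRing L] {ι : Type*} [DecidableEq ι] (x : L) (s : Finset ι)
    (f : ι → L) : ⁅x, ∑ i ∈ s, f i⁆ = ∑ i ∈ s, ⁅x, f i⁆ := by
  induction s using Finset.induction with
  | empty => simp
  | insert _ _ h ih => simp [Finset.sum_insert h, lie_add, ih]

end aux

/-- If W is symmetric and satisfies the commutation identity, then the
bracket `([x,y]_W)_s = Σ_{i,j} W^{ij}_s [x_i, y_j]` is a Lie bracket on `G^n`: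
bilinear, antisymmetric and satisfying the Jacobi identity. -/
theorem universal_extension_is_lie_bracket
    {K : Type*} [Field K] {G : Type*} [LieRing G] [LieAlgebra K G]
    (n : ℕ) (W : Fin n → Fin n → Fin n → K)
    (hsym : ∀ i j s, W i j s = W j i s)
    (hcomm : ∀ i s q p, ∑ k, (W s k i * W q p k - W q k i * W s p k) = 0)
    (br : (Fin n → G) → (Fin n → G) → (Fin n → G))
    (hbr : ∀ x y s, br x y s = ∑ i, ∑ j, W i j s • ⁅x i, y j⁆) :
    (∀ x x' y, br (x + x') y = br x y + br x' y) ∧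
    (∀ x y y', br x (y + y') = br x y + br x y') ∧
    (∀ (c : K) x y, br (c • x) y = c • br x y) ∧
    (∀ (c : K) x y, br x (c • y) = c • br x y) ∧
    (∀ x y, br x y = - br y x) ∧
    (∀ x y z, br x (br y z) + br y (br z x) + br z (br x y) = 0) := by
  set C : Fin n → Fin n → Fin n → Fin n → K := fun i p q s => ∑ j, W i j s * W p q j with hC
  have hC12 : ∀ i p q s, C i p q s = C p i q s := by
    intro i p q s
    have h := hcomm s i p q
    rw [Finset.sum_sub_distrib, sub_eq_zero] at h
    simpa [hC] using h
  have hC23 : ∀ i p q s, C i p q s = C i q p s := by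
    intro i p q s
    exact Finset.sum_congr rfl fun j _ => by rw [hsym p q]
  have hCcyc : ∀ i p q s, C i p q s = C q i p s := fun i p q s => by
    rw [hC12, hC23, hC12, hC23]
  have hexp : ∀ x y z : Fin n → G, ∀ s,
      br x (br y z) s = ∑ i, ∑ p, ∑ q, C i p q s • ⁅x i, ⁅y p, z q⁆⁆ := by
    intro x y z s
    rw [hbr]
    refine Finset.sum_congr rfl fun i _ => ?_
    calc ∑ j, W i j s • ⁅x i, br y z j⁆
        = ∑ j, ∑ p, ∑ q, (W i j s * W p q j) • ⁅x i, ⁅y p, z q⁆⁆ := by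
          refine Finset.sum_congr rfl fun j _ => ?_
          rw [hbr]
          simp [my_lie_sum, lie_smul, Finset.smul_sum, smul_smul]
      _ = ∑ p, ∑ j, ∑ q, (W i j s * W p q j) • ⁅x i, ⁅y p, z q⁆⁆ := Finset.sum_comm
      _ = ∑ p, ∑ q, ∑ j, (W i j s * W p q j) • ⁅x i, ⁅y p, z q⁆⁆ :=
          Finset.sum_congr rfl fun p _ => Finset.sum_comm
      _ = ∑ p, ∑ q, C i p q s • ⁅x i, ⁅y p, z q⁆⁆ := by
          simp [hC, Finset.sum_smul]
  refine ⟨?_, ?_, ?_, ?_, ?_, ?_⟩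
  · intro x x' y; funext s
    simp [hbr, add_lie, smul_add, Finset.sum_add_distrib]
  · intro x y y'; funext s
    simp [hbr, lie_add, smul_add, Finset.sum_add_distrib]
  · intro c x y; funext s
    simp [hbr, smul_lie, smul_comm _ c, Finset.smul_sum]
  · intro c x y; funext s
    simp [hbr, lie_smul, smul_comm _ c, Finset.smul_sum]
  · intro x y; funext s
    rw [hbr, Pi.neg_apply, hbr, ← neg_eq_iff_eq_neg]
    rw [Finset.sum_comm]
    simp only [← Finset.sum_neg_distrib, ← smul_neg, ← lie_skew (y _)]
    exact Finset.sum_congr rfl fun i _ => Finset.sum_congr rfl fun j _ => by rw [hsym]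
  · intro x y z; funext s
    simp only [Pi.add_apply, Pi.zero_apply, hexp]
    rw [show (∑ i, ∑ p, ∑ q, C i p q s • ⁅y i, ⁅z p, x q⁆⁆)
        = ∑ i, ∑ p, ∑ q, C p q i s • ⁅y p, ⁅z q, x i⁆⁆ from
        (cyc_sum _).trans (cyc_sum _),
      show (∑ i, ∑ p, ∑ q, C i p q s • ⁅z i, ⁅x p, y q⁆⁆)
        = ∑ i, ∑ p, ∑ q, C q i p s • ⁅z q, ⁅x i, y p⁆⁆ from cyc_sum _]
    simp only [← Finset.sum_add_distrib]
    refine Finset.sum_eq_zero fun i _ => Finset.sum_eq_zero fun p _ =>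
      Finset.sum_eq_zero fun q _ => ?_
    rw [← hCcyc p q i, hCcyc q i p, ← smul_add, ← smul_add, lie_jacobi, smul_zero]
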